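/- Let p > 3 be a prime, set n = (p-1)/2, and let t be a p-adic integer. Then ∑_{k=0}^{n} binom(pt, k) · binom(-1 - pt, k) · (1 + 2pt)/(1 + 2k) ≡ 1 + 2t + 4·p·t·q_p(2) (mod p²), where q_p(2) = (2^{p-1} - 1)/p is the Fermat quotient; here the sum is a p-adic number (the k = n term involves division by 1 + 2n = p) and the congruence means the difference lies in p²·ℤ_p. -/

import Mathlib

/-- The generalized binomial coefficient `C(x, n) = x(x-1)⋯(x-n+1)/n!` for a
`p`-adic number `x` (a `p`-adic integer when `x` is). -/
noncomputable def padicChoose {p : ℕ} [Fact p.Prime] (x : ℚ_[p]) (n : ℕ) : ℚ_[p] :=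
  (∏ j ∈ Finset.range n, (x - j)) / (n.factorial : ℚ_[p])

variable {p : ℕ} [hp : Fact p.Prime]

lemma myNormNatLe (m : ℕ) : ‖(m : ℚ_[p])‖ ≤ 1 := by
  have := Padic.norm_int_le_one (p := p) (m : ℤ)
  push_cast at this; exact this

lemma myNormNatEq {m : ℕ} (h : ¬ p ∣ m) : ‖(m : ℚ_[p])‖ = 1 := by
  refine le_antisymm (myNormNatLe m) ?_
  by_contra hlt
  push_neg at hlt
  have : ((p:ℤ)) ∣ (m:ℤ) := by
    rw [← Padic.norm_intCast_lt_one_iff]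
    push_cast
    exact hlt
  exact h (by exact_mod_cast this)

lemma myNormIntDvd {N : ℤ} (h : (p:ℤ) ∣ N) : ‖(N : ℚ_[p])‖ ≤ ((p:ℝ))⁻¹ := by
  obtain ⟨M, rfl⟩ := h
  push_cast
  rw [norm_mul, Padic.norm_p]
  calc (p:ℝ)⁻¹ * ‖(M:ℚ_[p])‖ ≤ (p:ℝ)⁻¹ * 1 := by
        apply mul_le_mul_of_nonneg_left (Padic.norm_int_le_one M)
        positivity
    _ = (p:ℝ)⁻¹ := mul_one _

lemma myProdSub (s : Finset ℕ) (f g : ℕ → ℚ_[p]) (ε : ℝ) (hε : 0 ≤ ε)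
    (hf : ∀ i ∈ s, ‖f i‖ ≤ 1) (hg : ∀ i ∈ s, ‖g i‖ ≤ 1)
    (h : ∀ i ∈ s, ‖f i - g i‖ ≤ ε) :
    ‖∏ i ∈ s, f i - ∏ i ∈ s, g i‖ ≤ ε := by
  classical
  induction s using Finset.induction_on with
  | empty => simpa using hε
  | insert _ _ hx ih =>
    rename_i a s
    rw [Finset.prod_insert hx, Finset.prod_insert hx]
    have key : f a * ∏ i ∈ s, f i - g a * ∏ i ∈ s, g i
        = (f a - g a) * ∏ i ∈ s, f i + g a * (∏ i ∈ s, f i - ∏ i ∈ s, g i) := by ring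
    rw [key]
    refine le_trans (Padic.nonarchimedean _ _) (max_le ?_ ?_)
    · rw [norm_mul]
      have h1 : ‖f a - g a‖ ≤ ε := h a (Finset.mem_insert_self a s)
      have h2 : ‖∏ i ∈ s, f i‖ ≤ 1 := by
        rw [norm_prod]
        exact Finset.prod_le_one (fun i _ => norm_nonneg _)
          (fun i hi => hf i (Finset.mem_insert_of_mem hi))
      calc ‖f a - g a‖ * ‖∏ i ∈ s, f i‖ ≤ ε * 1 :=
            mul_le_mul h1 h2 (norm_nonneg _) hε
        _ = ε := mul_one _
    · rw [norm_mul]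
      have h1 : ‖g a‖ ≤ 1 := hg a (Finset.mem_insert_self a s)
      have h2 : ‖∏ i ∈ s, f i - ∏ i ∈ s, g i‖ ≤ ε :=
        ih (fun i hi => hf i (Finset.mem_insert_of_mem hi))
          (fun i hi => hg i (Finset.mem_insert_of_mem hi))
          (fun i hi => h i (Finset.mem_insert_of_mem hi))
      calc ‖g a‖ * ‖_‖ ≤ 1 * ε := mul_le_mul h1 h2 (norm_nonneg _) zero_le_one
        _ = ε := one_mul _

lemma myMul3 (a b c a' b' c' : ℚ_[p]) (ε : ℝ)
    (hb : ‖b‖ ≤ 1) (hc : ‖c‖ ≤ 1) (ha' : ‖a'‖ ≤ 1) (hb' : ‖b'‖ ≤ 1)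
    (h1 : ‖a - a'‖ ≤ ε) (h2 : ‖b - b'‖ ≤ ε) (h3 : ‖c - c'‖ ≤ ε) :
    ‖a * b * c - a' * b' * c'‖ ≤ ε := by
  have hε : 0 ≤ ε := le_trans (norm_nonneg _) h1
  have key : a * b * c - a' * b' * c'
      = (a - a') * (b * c) + a' * ((b - b') * c) + a' * b' * (c - c') := by ring
  rw [key]
  refine le_trans (Padic.nonarchimedean _ _) (max_le (le_trans (Padic.nonarchimedean _ _) (max_le ?_ ?_)) ?_)
  · rw [norm_mul, norm_mul]
    calc ‖a - a'‖ * (‖b‖ * ‖c‖) ≤ ε * (1 * 1) := by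
          apply mul_le_mul h1 (mul_le_mul hb hc (norm_nonneg _) zero_le_one)
            (by positivity) hε
      _ = ε := by ring
  · rw [norm_mul, norm_mul]
    calc ‖a'‖ * (‖b - b'‖ * ‖c‖) ≤ 1 * (ε * 1) := by
          apply mul_le_mul ha' (mul_le_mul h2 hc (norm_nonneg _) hε) (by positivity) zero_le_one
      _ = ε := by ring
  · rw [norm_mul, norm_mul]
    calc ‖a'‖ * ‖b'‖ * ‖c - c'‖ ≤ 1 * 1 * ε := by
          apply mul_le_mul (mul_le_mul ha' hb' (norm_nonneg _) zero_le_one) h3 (norm_nonneg _) (by norm_num)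
      _ = ε := by ring

lemma mySumLe (s : Finset ℕ) (f : ℕ → ℚ_[p]) (ε : ℝ) (hε : 0 ≤ ε)
    (h : ∀ i ∈ s, ‖f i‖ ≤ ε) : ‖∑ i ∈ s, f i‖ ≤ ε := by
  classical
  induction s using Finset.induction_on with
  | empty => simpa using hε
  | insert _ _ hx ih =>
    rename_i a s
    rw [Finset.sum_insert hx]
    refine le_trans (Padic.nonarchimedean _ _) (max_le (h a (Finset.mem_insert_self a s)) ?_)
    exact ih (fun i hi => h i (Finset.mem_insert_of_mem hi))

lemma myChooseCongr (j : ℕ) (hj : j ≤ p - 1) :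
    (p:ℤ) ∣ ((p-1).choose j : ℤ) - (-1)^j := by
  induction j with
  | zero => simp
  | succ j ih =>
    have hj' : j ≤ p - 1 := le_trans (Nat.le_succ j) hj
    have hd : (p:ℤ) ∣ (p.choose (j+1) : ℤ) := by
      exact_mod_cast Int.natCast_dvd_natCast.mpr (Nat.Prime.dvd_choose_self hp.out (Nat.succ_ne_zero j)
        (by omega : j + 1 < p))
    have hps : p - 1 + 1 = p := Nat.succ_pred_eq_of_pos hp.out.pos
    have hsum : (p.choose (j+1) : ℤ) = ((p-1).choose j : ℤ) + ((p-1).choose (j+1) : ℤ) := by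
      rw [← hps]
      exact_mod_cast congrArg (Nat.cast : ℕ → ℤ) (Nat.choose_succ_succ (p-1) j)
    have := ih hj'
    have key : ((p-1).choose (j+1) : ℤ) - (-1)^(j+1)
        = (p.choose (j+1) : ℤ) - (((p-1).choose j : ℤ) - (-1)^j) - ((-1)^j + (-1)^(j+1)) := by
      rw [hsum]; ring
    rw [key]
    have hz : ((-1:ℤ))^j + (-1)^(j+1) = 0 := by ring
    rw [hz, sub_zero]
    exact dvd_sub hd this

lemma mySumPairs (m : ℕ) (f : ℕ → ℚ_[p]) :
    ∑ j ∈ Finset.range (2*m), f j = ∑ k ∈ Finset.range m, (f (2*k) + f (2*k+1)) := by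
  induction m with
  | zero => simp
  | succ m ih =>
    have : 2 * (m+1) = (2*m + 1) + 1 := by ring
    rw [this, Finset.sum_range_succ, Finset.sum_range_succ, Finset.sum_range_succ, ih]
    ring

lemma myUnitAdd (a b : ℚ_[p]) (ha : ‖a‖ ≤ 1) (hb : ‖b‖ ≤ 1) : ‖a + b‖ ≤ 1 :=
  le_trans (Padic.nonarchimedean _ _) (max_le ha hb)

lemma myNormNatEq' {m : ℕ} (h0 : 0 < m) (h1 : m < p) : ‖(m : ℚ_[p])‖ = 1 :=
  myNormNatEq (fun hd => absurd (Nat.le_of_dvd h0 hd) (not_le.mpr h1))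

set_option maxHeartbeats 1000000 in
lemma myW (n m : ℕ) (hpn : 2*n+1 = p) (hm : n = m+1) :
    ‖(4:ℚ_[p]) - (∑ j ∈ Finset.range m, (((j:ℚ_[p])+1) * (2*(j:ℚ_[p])+3))⁻¹)
      - 4 * (((2 ^ (p - 1) - 1 : ℚ) / p : ℚ) : ℚ_[p])‖ ≤ (p:ℝ)⁻¹ := by
  have hp1 : 1 ≤ p := hp.out.one_lt.le
  have hPne : (p:ℚ_[p]) ≠ 0 := Nat.cast_ne_zero.mpr hp.out.ne_zero
  have hqc : (((2 ^ (p - 1) - 1 : ℚ) / p : ℚ) : ℚ_[p])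
      = ((2:ℚ_[p]) ^ (p-1) - 1) / p := by
    rw [Rat.cast_div, Rat.cast_sub, Rat.cast_pow, Rat.cast_natCast, Rat.cast_one, Rat.cast_ofNat]
  -- the sum of middle binomial coefficients, in ℕ
  have hsplitNat : (∑ j ∈ Finset.range (2*m), p.choose (j+2)) + p + p + 2 = 2^p := by
    have e0 : ∑ i ∈ Finset.range (p+1), p.choose i = 2^p := Nat.sum_range_choose p
    rw [show p + 1 = (2*m+2+1) + 1 by omega] at e0
    rw [Finset.sum_range_succ, Finset.sum_range_succ, Finset.sum_range_succ',
      Finset.sum_range_succ'] at e0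
    have hlast : p.choose (2*m+2+1) = 1 := by
      rw [show 2*m+2+1 = p by omega]; exact Nat.choose_self p
    have hlast2 : p.choose (2*m+2) = p := by
      have h1 : p.choose (p - 1) = p.choose 1 := Nat.choose_symm (by omega)
      rw [show 2*m+2 = p - 1 by omega, h1, Nat.choose_one_right]
    rw [hlast, hlast2] at e0
    have hmid : ∑ j ∈ Finset.range (2*m), p.choose (j+1+1) = ∑ j ∈ Finset.range (2*m), p.choose (j+2) :=
      Finset.sum_congr rfl fun j _ => rfl
    rw [hmid] at e0
    simp only [Nat.zero_add, Nat.choose_zero_right, Nat.choose_one_right] at e0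
    omega
  have hsplit : (∑ j ∈ Finset.range (2*m), (p.choose (j+2) : ℚ_[p]))
      = 2^p - 2 - p - p := by
    have := congrArg (Nat.cast : ℕ → ℚ_[p]) hsplitNat
    push_cast at this
    linear_combination this
  have hpairs : ∑ j ∈ Finset.range (2*m), (p.choose (j+2) : ℚ_[p])
      = ∑ k ∈ Finset.range m, ((p.choose (2*k+2) : ℚ_[p]) + (p.choose (2*k+3) : ℚ_[p])) := by
    rw [mySumPairs m (fun j => (p.choose (j+2) : ℚ_[p]))]
  have h4qc : 4 * (((2 ^ (p - 1) - 1 : ℚ) / p : ℚ) : ℚ_[p])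
      = 4 + (2/(p:ℚ_[p])) * ∑ k ∈ Finset.range m,
          ((p.choose (2*k+2) : ℚ_[p]) + (p.choose (2*k+3) : ℚ_[p])) := by
    rw [hqc, ← hpairs, hsplit]
    have hpow : (2:ℚ_[p])^p = 2^(p-1) * 2 := by
      rw [← pow_succ]; congr 1; omega
    field_simp
    rw [hpow]
    ring
  rw [h4qc]
  have hassemble : (4:ℚ_[p]) - (∑ j ∈ Finset.range m, (((j:ℚ_[p])+1) * (2*(j:ℚ_[p])+3))⁻¹)
      - (4 + (2/(p:ℚ_[p])) * ∑ k ∈ Finset.range m,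
          ((p.choose (2*k+2) : ℚ_[p]) + (p.choose (2*k+3) : ℚ_[p])))
      = - ∑ k ∈ Finset.range m, ((((k:ℚ_[p])+1) * (2*(k:ℚ_[p])+3))⁻¹
          + (2/(p:ℚ_[p])) * ((p.choose (2*k+2) : ℚ_[p]) + (p.choose (2*k+3) : ℚ_[p]))) := by
    simp only [mul_add, Finset.sum_add_distrib, ← Finset.mul_sum]
    ring
  rw [hassemble, norm_neg]
  apply mySumLe _ _ _ (by positivity)
  intro k hk
  have hkm : k < m := Finset.mem_range.mp hk
  set C1 : ℤ := ((p-1).choose (2*k+1) : ℤ) with hC1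
  set C2 : ℤ := ((p-1).choose (2*k+2) : ℤ) with hC2
  have hk1 : ((k:ℚ_[p])+1) ≠ 0 := by
    have : (((k+1:ℕ)):ℚ_[p]) ≠ 0 := Nat.cast_ne_zero.mpr (Nat.succ_ne_zero k)
    push_cast at this; exact this
  have hk3 : (2*(k:ℚ_[p])+3) ≠ 0 := by
    have : (((2*k+3:ℕ)):ℚ_[p]) ≠ 0 := Nat.cast_ne_zero.mpr (by omega)
    push_cast at this; exact this
  have hk2 : (2*(k:ℚ_[p])+2) ≠ 0 := by
    have : (((2*k+2:ℕ)):ℚ_[p]) ≠ 0 := Nat.cast_ne_zero.mpr (by omega)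
    push_cast at this; exact this
  -- choose identities with no division
  have hA : (p.choose (2*k+2) : ℚ_[p]) * (2*(k:ℚ_[p])+2) = (p:ℚ_[p]) * (C1:ℚ_[p]) := by
    have hnat := Nat.add_one_mul_choose_eq (p-1) (2*k+1)
    rw [show p - 1 + 1 = p by omega, show 2*k+1+1 = 2*k+2 by omega] at hnat
    have := congrArg (Nat.cast : ℕ → ℚ_[p]) hnat
    push_cast at this
    push_cast [hC1]
    linear_combination -this
  have hB : (p.choose (2*k+3) : ℚ_[p]) * (2*(k:ℚ_[p])+3) = (p:ℚ_[p]) * (C2:ℚ_[p]) := by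
    have hnat := Nat.add_one_mul_choose_eq (p-1) (2*k+2)
    rw [show p - 1 + 1 = p by omega, show 2*k+2+1 = 2*k+3 by omega] at hnat
    have := congrArg (Nat.cast : ℕ → ℚ_[p]) hnat
    push_cast at this
    push_cast [hC2]
    linear_combination -this
  have hA' : (p.choose (2*k+2) : ℚ_[p]) = (p:ℚ_[p]) * (C1:ℚ_[p]) / (2*(k:ℚ_[p])+2) := by
    rw [eq_div_iff hk2]; exact hA
  have hB' : (p.choose (2*k+3) : ℚ_[p]) = (p:ℚ_[p]) * (C2:ℚ_[p]) / (2*(k:ℚ_[p])+3) := by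
    rw [eq_div_iff hk3]; exact hB
  have hterm : (((k:ℚ_[p])+1) * (2*(k:ℚ_[p])+3))⁻¹
      + (2/(p:ℚ_[p])) * ((p.choose (2*k+2) : ℚ_[p]) + (p.choose (2*k+3) : ℚ_[p]))
      = ((1 + (2*(k:ℤ)+3) * C1 + (2*(k:ℤ)+2) * C2 : ℤ) : ℚ_[p])
          / (((k:ℚ_[p])+1) * (2*(k:ℚ_[p])+3)) := by
    rw [hA', hB']
    push_cast
    rw [eq_div_iff (mul_ne_zero hk1 hk3)]
    have e1 : (2/(p:ℚ_[p])) * ((p:ℚ_[p]) * (C1:ℚ_[p]) / (2*(k:ℚ_[p])+2)) * (((k:ℚ_[p])+1) * (2*(k:ℚ_[p])+3)) = (2*(k:ℚ_[p])+3) * C1 := by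
      field_simp
    have e2 : (2/(p:ℚ_[p])) * ((p:ℚ_[p]) * (C2:ℚ_[p]) / (2*(k:ℚ_[p])+3)) * (((k:ℚ_[p])+1) * (2*(k:ℚ_[p])+3)) = (2*(k:ℚ_[p])+2) * C2 := by
      field_simp
    have e3 : (((k:ℚ_[p])+1) * (2*(k:ℚ_[p])+3))⁻¹ * (((k:ℚ_[p])+1) * (2*(k:ℚ_[p])+3)) = 1 :=
      inv_mul_cancel₀ (mul_ne_zero hk1 hk3)
    linear_combination e1 + e2 + e3
  rw [hterm]
  have hdvd : (p:ℤ) ∣ (1 + (2*(k:ℤ)+3) * C1 + (2*(k:ℤ)+2) * C2) := by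
    have h1 : (p:ℤ) ∣ C1 - (-1)^(2*k+1) := myChooseCongr (2*k+1) (by omega)
    have h2 : (p:ℤ) ∣ C2 - (-1)^(2*k+2) := myChooseCongr (2*k+2) (by omega)
    have e1 : ((-1:ℤ))^(2*k+1) = -1 := by rw [pow_succ, pow_mul]; norm_num
    have e2 : ((-1:ℤ))^(2*k+2) = 1 := by
      rw [show 2*k+2 = 2*(k+1) by ring, pow_mul]; norm_num
    rw [e1] at h1; rw [e2] at h2
    have : (1 + (2*(k:ℤ)+3) * C1 + (2*(k:ℤ)+2) * C2)
        = (2*(k:ℤ)+3) * (C1 + 1) + (2*(k:ℤ)+2) * (C2 - 1) := by ring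
    rw [this]
    exact dvd_add (Dvd.dvd.mul_left (by simpa using h1) _) (Dvd.dvd.mul_left h2 _)
  rw [div_eq_mul_inv, norm_mul, norm_inv]
  have hden : ‖((k:ℚ_[p])+1) * (2*(k:ℚ_[p])+3)‖ = 1 := by
    have a1 : ‖((k:ℚ_[p])+1)‖ = 1 := by
      have := myNormNatEq' (p := p) (m := k+1) (by omega) (by omega)
      push_cast at this; exact this
    have a3 : ‖(2*(k:ℚ_[p])+3)‖ = 1 := by
      have := myNormNatEq' (p := p) (m := 2*k+3) (by omega) (by omega)
      push_cast at this; exact this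
    rw [norm_mul, a1, a3, mul_one]
  rw [hden, inv_one, mul_one]
  exact myNormIntDvd hdvd

lemma myUnitSub (a b : ℚ_[p]) (ha : ‖a‖ ≤ 1) (hb : ‖b‖ ≤ 1) : ‖a - b‖ ≤ 1 := by
  rw [sub_eq_add_neg]; exact myUnitAdd _ _ ha (by rwa [norm_neg])

lemma myProdLe1 (s : Finset ℕ) (f : ℕ → ℚ_[p]) (h : ∀ i ∈ s, ‖f i‖ ≤ 1) :
    ‖∏ i ∈ s, f i‖ ≤ 1 := by
  rw [norm_prod]
  exact Finset.prod_le_one (fun i _ => norm_nonneg _) h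

lemma myProdNegFact (l : ℕ) : ∏ j ∈ Finset.range l, (-(((j:ℚ_[p]))+1))
    = (-1)^l * (l.factorial : ℚ_[p]) := by
  induction l with
  | zero => simp
  | succ l ih =>
    rw [Finset.prod_range_succ, ih, Nat.factorial_succ, pow_succ]
    push_cast
    ring

lemma myNormNat1 (j : ℕ) : ‖((j:ℚ_[p])+1)‖ ≤ 1 := by
  have := myNormNatLe (p := p) (j+1); push_cast at this; exact this

lemma myNorm2 : ‖(2:ℚ_[p])‖ ≤ 1 := by
  have := myNormNatLe (p := p) 2; push_cast at this; exact this

lemma myProdNeg1 (k : ℕ) : ∏ j ∈ Finset.range k, (-1 - (j:ℚ_[p]))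
    = (-1)^k * (k.factorial : ℚ_[p]) := by
  induction k with
  | zero => simp
  | succ k ih =>
    rw [Finset.prod_range_succ, ih, Nat.factorial_succ, pow_succ]
    push_cast
    ring

lemma myCancelAux {K : Type*} [Field K] (T a b : K) (hb : b ≠ 0) :
    T * a⁻¹ = T * b * (a*b)⁻¹ := by
  rw [mul_inv, mul_comm a⁻¹ b⁻¹, ← mul_assoc, mul_assoc T b b⁻¹,
    mul_inv_cancel₀ hb, mul_one]

set_option maxHeartbeats 1000000 in
lemma myEmid (t : ℚ_[p]) (ht : ‖t‖ ≤ 1) (k l : ℕ) (hkl : k = l + 1) (hk : 2*k+1 < p) :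
    ‖padicChoose ((p:ℚ_[p])*t) k * padicChoose (-1 - (p:ℚ_[p])*t) k *
        ((1+2*((p:ℚ_[p])*t))/(1+2*(k:ℚ_[p])))
      - (-((p:ℚ_[p])*t) * (((k:ℚ_[p]) * (2*(k:ℚ_[p])+1))⁻¹))‖ ≤ (p:ℝ)⁻¹ * (p:ℝ)⁻¹ := by
  have hp1 : (1:ℝ) ≤ p := by exact_mod_cast hp.out.one_lt.le
  have hppos : (0:ℝ) < p := by linarith
  have hεpos : (0:ℝ) ≤ (p:ℝ)⁻¹ := by positivity
  have hεle1 : (p:ℝ)⁻¹ ≤ 1 := by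
    rw [inv_le_one_iff₀]; right; exact hp1
  set T : ℚ_[p] := (p:ℚ_[p])*t with hTdef
  have hTnorm : ‖T‖ ≤ (p:ℝ)⁻¹ := by
    rw [hTdef, norm_mul, Padic.norm_p]
    calc (p:ℝ)⁻¹ * ‖t‖ ≤ (p:ℝ)⁻¹ * 1 := by
          exact mul_le_mul_of_nonneg_left ht hεpos
      _ = (p:ℝ)⁻¹ := mul_one _
  have hT1 : ‖T‖ ≤ 1 := hTnorm.trans hεle1
  -- product splits
  have hsplit1 : ∏ j ∈ Finset.range k, (T - (j:ℚ_[p]))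
      = T * ∏ j ∈ Finset.range l, (T - ((j:ℚ_[p])+1)) := by
    rw [hkl, Finset.prod_range_succ']
    push_cast
    ring
  -- estimates
  have hu1 : ‖(∏ j ∈ Finset.range l, (T - ((j:ℚ_[p])+1)))
      - ∏ j ∈ Finset.range l, (-((j:ℚ_[p])+1))‖ ≤ (p:ℝ)⁻¹ := by
    apply myProdSub _ _ _ _ hεpos
    · intro j _; exact myUnitSub _ _ hT1 (myNormNat1 j)
    · intro j _; rw [norm_neg]; exact myNormNat1 j
    · intro j _
      have : (T - ((j:ℚ_[p])+1)) - (-((j:ℚ_[p])+1)) = T := by ring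
      rw [this]; exact hTnorm
  have hu2 : ‖(∏ j ∈ Finset.range k, (-1 - T - (j:ℚ_[p])))
      - ∏ j ∈ Finset.range k, (-1 - (j:ℚ_[p]))‖ ≤ (p:ℝ)⁻¹ := by
    apply myProdSub _ _ _ _ hεpos
    · intro j _
      exact myUnitSub _ _ (myUnitSub _ _ (by rw [norm_neg, norm_one]) hT1) (myNormNatLe j)
    · intro j _
      exact myUnitSub _ _ (by rw [norm_neg, norm_one]) (myNormNatLe j)
    · intro j _
      have : (-1 - T - (j:ℚ_[p])) - (-1 - (j:ℚ_[p])) = -T := by ring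
      rw [this, norm_neg]; exact hTnorm
  -- closed forms
  have hv1 : ∏ j ∈ Finset.range l, (-((j:ℚ_[p])+1)) = (-1)^l * (l.factorial : ℚ_[p]) :=
    myProdNegFact l
  have hv2 : ∏ j ∈ Finset.range k, (-1 - (j:ℚ_[p])) = (-1)^k * (k.factorial : ℚ_[p]) :=
    myProdNeg1 k
  have hx : (-1:ℚ_[p])^l * (-1)^k = -1 := by
    rw [hkl, pow_succ, ← mul_assoc, ← pow_add, show l + l = 2*l by ring, pow_mul,
      neg_one_sq, one_pow, one_mul]
  have hv12 : ((-1:ℚ_[p])^l * (l.factorial : ℚ_[p])) * ((-1)^k * (k.factorial : ℚ_[p]))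
      = -((l.factorial : ℚ_[p]) * (k.factorial : ℚ_[p])) := by
    linear_combination ((l.factorial : ℚ_[p]) * (k.factorial : ℚ_[p])) * hx
  -- bracket bound
  have hbr : ‖(∏ j ∈ Finset.range l, (T - ((j:ℚ_[p])+1)))
        * (∏ j ∈ Finset.range k, (-1 - T - (j:ℚ_[p]))) * (1+2*T)
      - (-((l.factorial : ℚ_[p]) * (k.factorial : ℚ_[p])))‖ ≤ (p:ℝ)⁻¹ := by
    have h2T : ‖2*T‖ ≤ (p:ℝ)⁻¹ := by
      rw [norm_mul]
      calc ‖(2:ℚ_[p])‖ * ‖T‖ ≤ 1 * (p:ℝ)⁻¹ := mul_le_mul myNorm2 hTnorm (norm_nonneg _) zero_le_one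
        _ = (p:ℝ)⁻¹ := one_mul _
    have := myMul3 (∏ j ∈ Finset.range l, (T - ((j:ℚ_[p])+1)))
      (∏ j ∈ Finset.range k, (-1 - T - (j:ℚ_[p]))) (1+2*T)
      (∏ j ∈ Finset.range l, (-((j:ℚ_[p])+1))) (∏ j ∈ Finset.range k, (-1 - (j:ℚ_[p]))) 1
      ((p:ℝ)⁻¹)
      (myProdLe1 _ _ (fun j _ => myUnitSub _ _ (myUnitSub _ _ (by rw [norm_neg, norm_one]) hT1) (myNormNatLe j)))
      (myUnitAdd _ _ (norm_one.le) (by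
        rw [norm_mul]
        calc ‖(2:ℚ_[p])‖ * ‖T‖ ≤ 1 * 1 := mul_le_mul myNorm2 hT1 (norm_nonneg _) zero_le_one
          _ = 1 := one_mul _))
      (myProdLe1 _ _ (fun j _ => by rw [norm_neg]; exact myNormNat1 j))
      (myProdLe1 _ _ (fun j _ => myUnitSub _ _ (by rw [norm_neg, norm_one]) (myNormNatLe j)))
      hu1 hu2 (by rw [show (1+2*T) - 1 = 2*T by ring]; exact h2T)
    rw [mul_one, hv1, hv2, hv12] at this
    exact this
  -- nonzeroness
  have hfkne : (k.factorial : ℚ_[p]) ≠ 0 := Nat.cast_ne_zero.mpr (Nat.factorial_ne_zero k)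
  have hflne : (l.factorial : ℚ_[p]) ≠ 0 := Nat.cast_ne_zero.mpr (Nat.factorial_ne_zero l)
  have hkne : ((k:ℚ_[p])) ≠ 0 := Nat.cast_ne_zero.mpr (by omega)
  have h2k1ne : (1+2*(k:ℚ_[p])) ≠ 0 := by
    have h : (((2*k+1:ℕ)):ℚ_[p]) ≠ 0 := Nat.cast_ne_zero.mpr (by omega)
    push_cast at h
    intro hcon; apply h; linear_combination hcon
  have hkfac : (k.factorial : ℚ_[p]) = (k:ℚ_[p]) * (l.factorial:ℚ_[p]) := by
    rw [hkl, Nat.factorial_succ]; push_cast; ring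
  -- the identity
  have hiden : padicChoose T k * padicChoose (-1 - T) k * ((1+2*T)/(1+2*(k:ℚ_[p])))
      - (-T * (((k:ℚ_[p]) * (2*(k:ℚ_[p])+1))⁻¹))
      = T * ((∏ j ∈ Finset.range l, (T - ((j:ℚ_[p])+1)))
          * (∏ j ∈ Finset.range k, (-1 - T - (j:ℚ_[p]))) * (1+2*T)
          - (-((l.factorial : ℚ_[p]) * (k.factorial : ℚ_[p]))))
        * (((k.factorial : ℚ_[p]))^2 * (1+2*(k:ℚ_[p])))⁻¹ := by
    have hden : ((k.factorial:ℚ_[p]))^2*(1+2*(k:ℚ_[p]))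
        = ((k:ℚ_[p])*(2*(k:ℚ_[p])+1)) * ((l.factorial:ℚ_[p])*(k.factorial:ℚ_[p])) := by
      rw [hkfac]; ring
    have e1 : -(-T * (((k:ℚ_[p]) * (2*(k:ℚ_[p])+1))⁻¹))
        = T * ((l.factorial:ℚ_[p]) * (k.factorial:ℚ_[p]))
            * ((((k:ℚ_[p])*(2*(k:ℚ_[p])+1)) * ((l.factorial:ℚ_[p])*(k.factorial:ℚ_[p])))⁻¹) := by
      rw [neg_mul, neg_neg]
      exact myCancelAux T _ _ (mul_ne_zero hflne hfkne)
    simp only [padicChoose]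
    rw [hsplit1, sub_eq_add_neg, e1, ← hden, mul_inv]
    ring
  rw [hiden, norm_mul, norm_mul]
  have hinv : ‖(((k.factorial : ℚ_[p]))^2 * (1+2*(k:ℚ_[p])))⁻¹‖ = 1 := by
    rw [norm_inv, norm_mul, norm_pow]
    have e1 : ‖(k.factorial : ℚ_[p])‖ = 1 := by
      apply myNormNatEq
      intro hd
      have := (Nat.Prime.dvd_factorial hp.out).mp hd
      omega
    have e2 : ‖(1+2*(k:ℚ_[p]))‖ = 1 := by
      have h : (1+2*(k:ℚ_[p])) = (((2*k+1:ℕ)):ℚ_[p]) := by push_cast; ring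
      rw [h]
      exact myNormNatEq' (by omega) (by omega)
    rw [e1, e2]
    norm_num
  rw [hinv, mul_one]
  exact mul_le_mul hTnorm hbr (norm_nonneg _) hεpos

set_option maxHeartbeats 1000000 in
lemma myEn (t : ℚ_[p]) (ht : ‖t‖ ≤ 1) (n m : ℕ) (hpn : 2*n+1 = p) (hm : n = m+1) :
    ‖padicChoose ((p:ℚ_[p])*t) n * padicChoose (-1 - (p:ℚ_[p])*t) n *
        ((1+2*((p:ℚ_[p])*t))/(1+2*(n:ℚ_[p])))
      - (2*t + 2*((p:ℚ_[p])*t))‖ ≤ (p:ℝ)⁻¹ * (p:ℝ)⁻¹ := by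
  have hp1 : (1:ℝ) ≤ p := by exact_mod_cast hp.out.one_lt.le
  have hεpos : (0:ℝ) ≤ (p:ℝ)⁻¹ := by positivity
  have hεle1 : (p:ℝ)⁻¹ ≤ 1 := by rw [inv_le_one_iff₀]; right; exact hp1
  have hε2pos : (0:ℝ) ≤ (p:ℝ)⁻¹ * (p:ℝ)⁻¹ := by positivity
  set T : ℚ_[p] := (p:ℚ_[p])*t with hTdef
  have hTnorm : ‖T‖ ≤ (p:ℝ)⁻¹ := by
    rw [hTdef, norm_mul, Padic.norm_p]
    calc (p:ℝ)⁻¹ * ‖t‖ ≤ (p:ℝ)⁻¹ * 1 := mul_le_mul_of_nonneg_left ht hεpos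
      _ = (p:ℝ)⁻¹ := mul_one _
  have hT1 : ‖T‖ ≤ 1 := hTnorm.trans hεle1
  have hpcast : (1:ℚ_[p]) + 2*(n:ℚ_[p]) = (p:ℚ_[p]) := by
    have := congrArg (Nat.cast : ℕ → ℚ_[p]) hpn
    push_cast at this
    linear_combination this
  have hncast : (n:ℚ_[p]) = ((p:ℚ_[p]) - 1)/2 := by
    rw [eq_div_iff (by norm_num : (2:ℚ_[p]) ≠ 0)]
    linear_combination hpcast
  have hmcast : (m:ℚ_[p]) = (n:ℚ_[p]) - 1 := by
    have := congrArg (Nat.cast : ℕ → ℚ_[p]) hm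
    push_cast at this
    linear_combination -this
  -- splits
  have hsplitA : ∏ j ∈ Finset.range n, (T - (j:ℚ_[p]))
      = T * ∏ j ∈ Finset.range m, (T - ((j:ℚ_[p])+1)) := by
    rw [hm, Finset.prod_range_succ']
    push_cast
    ring
  have hsplitB : ∏ j ∈ Finset.range n, (-1 - T - (j:ℚ_[p]))
      = (∏ j ∈ Finset.range m, (-1 - T - (j:ℚ_[p]))) * (-1 - T - (m:ℚ_[p])) := by
    rw [hm, Finset.prod_range_succ]
  -- pairing estimate
  have hXest : ‖∏ j ∈ Finset.range m, ((T - ((j:ℚ_[p])+1)) * (-1 - T - (j:ℚ_[p])))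
      - ∏ j ∈ Finset.range m, (((j:ℚ_[p])+1)^2)‖ ≤ (p:ℝ)⁻¹ * (p:ℝ)⁻¹ := by
    apply myProdSub _ _ _ _ hε2pos
    · intro j _
      rw [norm_mul]
      exact mul_le_one₀ (myUnitSub _ _ hT1 (myNormNat1 j)) (norm_nonneg _)
        (myUnitSub _ _ (myUnitSub _ _ (by rw [norm_neg, norm_one]) hT1) (myNormNatLe j))
    · intro j _
      rw [norm_pow]
      exact pow_le_one₀ (norm_nonneg _) (myNormNat1 j)
    · intro j _
      have : (T - ((j:ℚ_[p])+1)) * (-1 - T - (j:ℚ_[p])) - (((j:ℚ_[p])+1)^2) = -(T*T) := by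
        ring
      rw [this, norm_neg, norm_mul]
      exact mul_le_mul hTnorm hTnorm (norm_nonneg _) hεpos
  have hXval : ∏ j ∈ Finset.range m, ((((j:ℚ_[p]))+1)^2) = ((m.factorial:ℚ_[p]))^2 := by
    rw [Finset.prod_pow]
    congr 1
    have := congrArg (Nat.cast : ℕ → ℚ_[p]) (Finset.prod_range_add_one_eq_factorial m)
    push_cast at this
    exact this
  have hX : ‖(∏ j ∈ Finset.range m, (T - ((j:ℚ_[p])+1)))
      * (∏ j ∈ Finset.range m, (-1 - T - (j:ℚ_[p]))) - ((m.factorial:ℚ_[p]))^2‖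
      ≤ (p:ℝ)⁻¹ * (p:ℝ)⁻¹ := by
    rw [Finset.prod_mul_distrib, hXval] at hXest
    exact hXest
  -- the D estimate
  have hD : ‖(-1 - T - (m:ℚ_[p]))*(1+2*T) + (n:ℚ_[p])‖ ≤ (p:ℝ)⁻¹ * (p:ℝ)⁻¹ := by
    have hid : (-1 - T - (m:ℚ_[p]))*(1+2*T) + (n:ℚ_[p]) = -(T*(p:ℚ_[p])) + -(2*(T*T)) := by
      rw [hmcast]
      linear_combination (-T) * hpcast
    rw [hid]
    refine le_trans (Padic.nonarchimedean _ _) (max_le ?_ ?_)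
    · rw [norm_neg, norm_mul, Padic.norm_p]
      exact mul_le_mul hTnorm le_rfl hεpos hεpos
    · rw [norm_neg, norm_mul, norm_mul]
      calc ‖(2:ℚ_[p])‖ * (‖T‖ * ‖T‖) ≤ 1 * ((p:ℝ)⁻¹ * (p:ℝ)⁻¹) := by
            exact mul_le_mul myNorm2 (mul_le_mul hTnorm hTnorm (norm_nonneg _) hεpos)
              (by positivity) zero_le_one
        _ = (p:ℝ)⁻¹ * (p:ℝ)⁻¹ := one_mul _
  -- nonzeroness
  have hfnne : (n.factorial : ℚ_[p]) ≠ 0 := Nat.cast_ne_zero.mpr (Nat.factorial_ne_zero n)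
  have hfmne : (m.factorial : ℚ_[p]) ≠ 0 := Nat.cast_ne_zero.mpr (Nat.factorial_ne_zero m)
  have hnne : ((n:ℚ_[p])) ≠ 0 := Nat.cast_ne_zero.mpr (by omega)
  have hPne : (p:ℚ_[p]) ≠ 0 := Nat.cast_ne_zero.mpr hp.out.ne_zero
  have hPne1 : (p:ℚ_[p]) ≠ 1 := by
    intro h
    exact hp.out.ne_one (by exact_mod_cast h)
  have hp1ne : (p:ℚ_[p]) - 1 ≠ 0 := sub_ne_zero.mpr hPne1
  have hnfac : (n.factorial : ℚ_[p]) = (n:ℚ_[p]) * (m.factorial:ℚ_[p]) := by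
    rw [hm, Nat.factorial_succ]
    push_cast
    ring
  -- rewrite the goal
  rw [hpcast]
  simp only [padicChoose]
  rw [hsplitA, hsplitB]
  have hiden : T * (∏ j ∈ Finset.range m, (T - ((j:ℚ_[p])+1))) / (n.factorial : ℚ_[p])
        * ((∏ j ∈ Finset.range m, (-1 - T - (j:ℚ_[p]))) * (-1 - T - (m:ℚ_[p]))
            / (n.factorial : ℚ_[p]))
        * ((1+2*T)/(p:ℚ_[p]))
      - (2*t + 2*T)
      = t * (((∏ j ∈ Finset.range m, (T - ((j:ℚ_[p])+1)))
              * (∏ j ∈ Finset.range m, (-1 - T - (j:ℚ_[p]))) - ((m.factorial:ℚ_[p]))^2)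
            * ((-1 - T - (m:ℚ_[p]))*(1+2*T)))
          * (((n.factorial : ℚ_[p]))^2)⁻¹
        + t * (((m.factorial:ℚ_[p]))^2 * ((-1 - T - (m:ℚ_[p]))*(1+2*T) + (n:ℚ_[p])))
          * (((n.factorial : ℚ_[p]))^2)⁻¹
        + -(t * (p:ℚ_[p]) * (p:ℚ_[p]) * ((n:ℚ_[p]))⁻¹) := by
    rw [hTdef, hnfac, hncast, hmcast, hncast]
    field_simp
    ring
  rw [hiden]
  have hinvn : ‖(((n.factorial : ℚ_[p]))^2)⁻¹‖ = 1 := by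
    rw [norm_inv, norm_pow]
    have e1 : ‖(n.factorial : ℚ_[p])‖ = 1 := by
      apply myNormNatEq
      intro hd
      have := (Nat.Prime.dvd_factorial hp.out).mp hd
      omega
    rw [e1]
    norm_num
  have hDle1 : ‖(-1 - T - (m:ℚ_[p]))*(1+2*T)‖ ≤ 1 := by
    rw [norm_mul]
    refine mul_le_one₀ ?_ (norm_nonneg _) ?_
    · exact myUnitSub _ _ (myUnitSub _ _ (by rw [norm_neg, norm_one]) hT1) (myNormNatLe m)
    · refine myUnitAdd _ _ norm_one.le ?_
      rw [norm_mul]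
      calc ‖(2:ℚ_[p])‖ * ‖T‖ ≤ 1 * 1 := mul_le_mul myNorm2 hT1 (norm_nonneg _) zero_le_one
        _ = 1 := one_mul _
  refine le_trans (Padic.nonarchimedean _ _)
    (max_le (le_trans (Padic.nonarchimedean _ _) (max_le ?_ ?_)) ?_)
  · rw [norm_mul, norm_mul, hinvn, mul_one, norm_mul]
    calc ‖t‖ * (‖_ - ((m.factorial:ℚ_[p]))^2‖ * ‖(-1 - T - (m:ℚ_[p]))*(1+2*T)‖)
        ≤ 1 * (((p:ℝ)⁻¹ * (p:ℝ)⁻¹) * 1) := by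
          exact mul_le_mul ht (mul_le_mul hX hDle1 (norm_nonneg _) hε2pos)
            (by positivity) zero_le_one
      _ = (p:ℝ)⁻¹ * (p:ℝ)⁻¹ := by ring
  · rw [norm_mul, norm_mul, hinvn, mul_one, norm_mul]
    have hm2 : ‖((m.factorial:ℚ_[p]))^2‖ ≤ 1 := by
      rw [norm_pow]
      exact pow_le_one₀ (norm_nonneg _) (myNormNatLe _)
    calc ‖t‖ * (‖((m.factorial:ℚ_[p]))^2‖ * ‖(-1 - T - (m:ℚ_[p]))*(1+2*T) + (n:ℚ_[p])‖)
        ≤ 1 * (1 * ((p:ℝ)⁻¹ * (p:ℝ)⁻¹)) := by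
          exact mul_le_mul ht (mul_le_mul hm2 hD (norm_nonneg _) zero_le_one)
            (by positivity) zero_le_one
      _ = (p:ℝ)⁻¹ * (p:ℝ)⁻¹ := by ring
  · rw [norm_neg, norm_mul, norm_mul, norm_mul, norm_inv]
    have hnn : ‖((n:ℚ_[p]))‖ = 1 := myNormNatEq' (by omega) (by omega)
    rw [hnn, inv_one, mul_one, Padic.norm_p]
    calc ‖t‖ * (p:ℝ)⁻¹ * (p:ℝ)⁻¹ ≤ 1 * (p:ℝ)⁻¹ * (p:ℝ)⁻¹ := by
          exact mul_le_mul (mul_le_mul ht le_rfl hεpos zero_le_one) le_rfl hεpos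
            (by positivity)
      _ = (p:ℝ)⁻¹ * (p:ℝ)⁻¹ := by ring

set_option maxHeartbeats 1000000 in
/-- For a prime `p > 3`, `n = (p-1)/2`, and a `p`-adic integer `t`:
`∑_{k=0}^{n} C(pt, k)·C(-1-pt, k)·(1+2pt)/(1+2k) ≡ 1 + 2t + 4·p·t·q_p(2) (mod p²)`,
where `q_p(2) = (2^{p-1}-1)/p` is the Fermat quotient; the sum is a `p`-adic
number and the congruence means the difference lies in `p²·ℤ_p`, i.e. has
`p`-adic norm at most `p^{-2}`. -/
theorem sum_padicChoose_mul_div_odd_congr (p : ℕ) [Fact p.Prime] (hp : 3 < p)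
    (n : ℕ) (hn : n = (p - 1) / 2) (t : ℤ_[p]) :
    ‖∑ k ∈ Finset.range (n + 1),
        padicChoose ((p : ℚ_[p]) * (t : ℚ_[p])) k *
          padicChoose (-1 - (p : ℚ_[p]) * (t : ℚ_[p])) k *
          ((1 + 2 * (p : ℚ_[p]) * (t : ℚ_[p])) / (1 + 2 * (k : ℚ_[p]))) -
      (1 + 2 * (t : ℚ_[p]) +
        4 * (p : ℚ_[p]) * (t : ℚ_[p]) * (((2 ^ (p - 1) - 1 : ℚ) / p : ℚ) : ℚ_[p]))‖
      ≤ (p : ℝ) ^ (-2 : ℤ) := by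
  have hprime : p.Prime := Fact.out
  have hodd : Odd p := hprime.odd_of_ne_two (by omega)
  obtain ⟨r, hr⟩ := hodd
  have hp5 : 5 ≤ p := by
    rcases Nat.lt_or_ge p 5 with h | h
    · interval_cases p <;> omega
    · exact h
  have hpn : 2*n + 1 = p := by omega
  set m := n - 1 with hmdef
  have hm : n = m + 1 := by omega
  have hεpos : (0:ℝ) ≤ (p:ℝ)⁻¹ := by positivity
  have hε2 : (p:ℝ)^(-2:ℤ) = (p:ℝ)⁻¹ * (p:ℝ)⁻¹ := by
    rw [zpow_neg, show ((2:ℤ)) = ((2:ℕ):ℤ) from rfl, zpow_natCast, pow_two, mul_inv]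
  have ht1 : ‖(t : ℚ_[p])‖ ≤ 1 := by
    rw [PadicInt.padic_norm_e_of_padicInt]
    exact PadicInt.norm_le_one t
  have hTle : ‖(p:ℚ_[p]) * (t : ℚ_[p])‖ ≤ (p:ℝ)⁻¹ := by
    rw [norm_mul, Padic.norm_p]
    calc (p:ℝ)⁻¹ * ‖(t:ℚ_[p])‖ ≤ (p:ℝ)⁻¹ * 1 := mul_le_mul_of_nonneg_left ht1 hεpos
      _ = (p:ℝ)⁻¹ := mul_one _
  set A : ℕ → ℚ_[p] := fun k =>
    if k = 0 then 1 + 2*((p:ℚ_[p]) * (t:ℚ_[p]))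
    else if k = n then 2*(t:ℚ_[p]) + 2*((p:ℚ_[p]) * (t:ℚ_[p]))
    else -((p:ℚ_[p]) * (t:ℚ_[p])) * (((k:ℚ_[p]) * (2*(k:ℚ_[p])+1))⁻¹) with hAdef
  -- per-term estimates
  have hFA : ∀ k ∈ Finset.range (n+1),
      ‖padicChoose ((p : ℚ_[p]) * (t : ℚ_[p])) k *
          padicChoose (-1 - (p : ℚ_[p]) * (t : ℚ_[p])) k *
          ((1 + 2 * (p : ℚ_[p]) * (t : ℚ_[p])) / (1 + 2 * (k : ℚ_[p]))) - A k‖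
        ≤ (p:ℝ)⁻¹ * (p:ℝ)⁻¹ := by
    intro k hk
    have hkn : k ≤ n := by
      have := Finset.mem_range.mp hk; omega
    by_cases h0 : k = 0
    · subst h0
      have hA0 : A 0 = 1 + 2*((p:ℚ_[p]) * (t:ℚ_[p])) := by
        simp only [hAdef]
        norm_num
      have e : padicChoose ((p : ℚ_[p]) * (t : ℚ_[p])) 0 *
          padicChoose (-1 - (p : ℚ_[p]) * (t : ℚ_[p])) 0 *
          ((1 + 2 * (p : ℚ_[p]) * (t : ℚ_[p])) / (1 + 2 * ((0:ℕ):ℚ_[p]))) - A 0 = 0 := by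
        rw [hA0]
        simp only [padicChoose, Finset.range_zero, Finset.prod_empty, Nat.factorial_zero,
          Nat.cast_one, Nat.cast_zero]
        norm_num
        ring
      rw [e, norm_zero]
      positivity
    · by_cases hN : k = n
      · subst hN
        have hAn : A k = 2*(t:ℚ_[p]) + 2*((p:ℚ_[p]) * (t:ℚ_[p])) := by
          simp only [hAdef]
          rw [if_neg h0]
          norm_num
        have e : padicChoose ((p : ℚ_[p]) * (t : ℚ_[p])) k *
            padicChoose (-1 - (p : ℚ_[p]) * (t : ℚ_[p])) k *
            ((1 + 2 * (p : ℚ_[p]) * (t : ℚ_[p])) / (1 + 2 * (k:ℚ_[p]))) - A k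
          = padicChoose ((p:ℚ_[p]) * (t:ℚ_[p])) k *
            padicChoose (-1 - (p:ℚ_[p]) * (t:ℚ_[p])) k *
            ((1 + 2*((p:ℚ_[p]) * (t:ℚ_[p]))) / (1 + 2*(k:ℚ_[p])))
            - (2*(t:ℚ_[p]) + 2*((p:ℚ_[p]) * (t:ℚ_[p]))) := by
          rw [hAn]
          ring
        rw [e]
        exact myEn (t : ℚ_[p]) ht1 k m hpn hm
      · have hAk : A k = -((p:ℚ_[p]) * (t:ℚ_[p])) * (((k:ℚ_[p]) * (2*(k:ℚ_[p])+1))⁻¹) := by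
          simp only [hAdef]
          rw [if_neg h0, if_neg hN]
        have e : padicChoose ((p : ℚ_[p]) * (t : ℚ_[p])) k *
            padicChoose (-1 - (p : ℚ_[p]) * (t : ℚ_[p])) k *
            ((1 + 2 * (p : ℚ_[p]) * (t : ℚ_[p])) / (1 + 2 * (k:ℚ_[p]))) - A k
          = padicChoose ((p:ℚ_[p]) * (t:ℚ_[p])) k *
            padicChoose (-1 - (p:ℚ_[p]) * (t:ℚ_[p])) k *
            ((1 + 2*((p:ℚ_[p]) * (t:ℚ_[p]))) / (1 + 2*(k:ℚ_[p])))
            - (-((p:ℚ_[p]) * (t:ℚ_[p])) * (((k:ℚ_[p]) * (2*(k:ℚ_[p])+1))⁻¹)) := by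
          rw [hAk]
          ring
        rw [e]
        exact myEmid (t : ℚ_[p]) ht1 k (k-1) (by omega) (by omega)
  have hb1 : ‖∑ k ∈ Finset.range (n+1),
      (padicChoose ((p : ℚ_[p]) * (t : ℚ_[p])) k *
          padicChoose (-1 - (p : ℚ_[p]) * (t : ℚ_[p])) k *
          ((1 + 2 * (p : ℚ_[p]) * (t : ℚ_[p])) / (1 + 2 * (k : ℚ_[p]))) - A k)‖
        ≤ (p:ℝ)⁻¹ * (p:ℝ)⁻¹ :=
    mySumLe _ _ _ (by positivity) hFA
  -- the sum of the approximations
  have hAsum : ∑ k ∈ Finset.range (n+1), A k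
      = (1 + 2*((p:ℚ_[p]) * (t:ℚ_[p]))) + (2*(t:ℚ_[p]) + 2*((p:ℚ_[p]) * (t:ℚ_[p])))
        + (-((p:ℚ_[p]) * (t:ℚ_[p]))
            * ∑ j ∈ Finset.range m, (((j:ℚ_[p])+1) * (2*(j:ℚ_[p])+3))⁻¹) := by
    rw [show n + 1 = (m+1) + 1 by omega, Finset.sum_range_succ, Finset.sum_range_succ']
    have hA0 : A 0 = 1 + 2*((p:ℚ_[p]) * (t:ℚ_[p])) := by
      simp only [hAdef]; norm_num
    have hAn : A (m+1) = 2*(t:ℚ_[p]) + 2*((p:ℚ_[p]) * (t:ℚ_[p])) := by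
      simp only [hAdef]; rw [if_neg (by omega), if_pos (by omega)]
    have hAj : ∀ j ∈ Finset.range m,
        A (j+1) = -((p:ℚ_[p]) * (t:ℚ_[p])) * ((((j:ℚ_[p])+1) * (2*(j:ℚ_[p])+3))⁻¹) := by
      intro j hj
      have hjm : j < m := Finset.mem_range.mp hj
      simp only [hAdef]
      rw [if_neg (by omega), if_neg (by omega)]
      have : (((j+1:ℕ)):ℚ_[p]) * (2*(((j+1:ℕ)):ℚ_[p])+1)
          = ((j:ℚ_[p])+1) * (2*(j:ℚ_[p])+3) := by
        push_cast; ring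
      rw [this]
    rw [Finset.sum_congr rfl hAj, hA0, hAn, ← Finset.mul_sum]
    ring
  have hW := myW (p := p) n m hpn hm
  have key : (∑ k ∈ Finset.range (n + 1),
        padicChoose ((p : ℚ_[p]) * (t : ℚ_[p])) k *
          padicChoose (-1 - (p : ℚ_[p]) * (t : ℚ_[p])) k *
          ((1 + 2 * (p : ℚ_[p]) * (t : ℚ_[p])) / (1 + 2 * (k : ℚ_[p])))) -
      (1 + 2 * (t : ℚ_[p]) +
        4 * (p : ℚ_[p]) * (t : ℚ_[p]) * (((2 ^ (p - 1) - 1 : ℚ) / p : ℚ) : ℚ_[p]))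
      = (∑ k ∈ Finset.range (n+1),
          (padicChoose ((p : ℚ_[p]) * (t : ℚ_[p])) k *
            padicChoose (-1 - (p : ℚ_[p]) * (t : ℚ_[p])) k *
            ((1 + 2 * (p : ℚ_[p]) * (t : ℚ_[p])) / (1 + 2 * (k : ℚ_[p]))) - A k))
        + ((p:ℚ_[p]) * (t:ℚ_[p])) *
          ((4:ℚ_[p]) - (∑ j ∈ Finset.range m, (((j:ℚ_[p])+1) * (2*(j:ℚ_[p])+3))⁻¹)
            - 4 * (((2 ^ (p - 1) - 1 : ℚ) / p : ℚ) : ℚ_[p])) := by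
    rw [Finset.sum_sub_distrib, hAsum]
    ring
  rw [key, hε2]
  refine le_trans (Padic.nonarchimedean _ _) (max_le hb1 ?_)
  rw [norm_mul]
  exact mul_le_mul hTle hW (norm_nonneg _) hεpos
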